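/- Let (V,w) be a weighted graph with V partitioned into disjoint nonempty parts V_1,…,V_c, let k_1,…,k_c be integers with 1 ≤ k_i ≤ |V_i|/2 for each i, and let 0 < ε ≤ 1/2. For each i ∈ [c], let H_i ⊆ V_i be a set such that every vertex of H_i has weighted degree at least the weighted degree of every vertex of V_i∖H_i, and such that either H_i = V_i or |H_i| ≥ k_i/ε. Then the maximum of δ_w(S) over all S ⊆ V with S∩V_i ⊆ H_i and |S∩V_i| = k_i for all i ∈ [c] is at least (1 − 4cε) times the maximum of δ_w(S) over all S ⊆ V with |S∩V_i| = k_i for all i ∈ [c]. (Approximate kernel for Constrained Max-Cut, Theorem 2.3.) -/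

import Mathlib

open Finset

/-- The cut value of a set `S`: total weight of pairs with exactly one endpoint in `S`. -/
noncomputable def cutVal {V : Type*} [Fintype V] [DecidableEq V]
    (w : V → V → ℝ) (S : Finset V) : ℝ :=
  ∑ u ∈ S, ∑ v ∈ Sᶜ, w u v

/-- The weighted degree of a vertex `v`. -/
noncomputable def wdeg {V : Type*} [Fintype V] [DecidableEq V]
    (w : V → V → ℝ) (v : V) : ℝ :=
  ∑ u ∈ Finset.univ.erase v, w u v

set_option linter.unusedSectionVars false
set_option linter.unusedTactic false
set_option linter.unreachableTactic false
set_option maxHeartbeats 1000000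

namespace MCK

variable {V : Type*} [Fintype V] [DecidableEq V]

noncomputable def wsum (w : V → V → ℝ) (P Q : Finset V) : ℝ := ∑ u ∈ P, ∑ v ∈ Q, w u v

noncomputable def ein (w : V → V → ℝ) (P : Finset V) : ℝ := ∑ u ∈ P, ∑ v ∈ P.erase u, w u v

lemma wsum_nonneg {w : V → V → ℝ} (hnonneg : ∀ u v, 0 ≤ w u v) (P Q : Finset V) :
    0 ≤ wsum w P Q :=
  Finset.sum_nonneg fun _ _ => Finset.sum_nonneg fun _ _ => hnonneg _ _

lemma ein_nonneg {w : V → V → ℝ} (hnonneg : ∀ u v, 0 ≤ w u v) (P : Finset V) :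
    0 ≤ ein w P :=
  Finset.sum_nonneg fun _ _ => Finset.sum_nonneg fun _ _ => hnonneg _ _

lemma wsum_comm {w : V → V → ℝ} (hsymm : ∀ u v, w u v = w v u) (P Q : Finset V) :
    wsum w P Q = wsum w Q P := by
  rw [wsum, Finset.sum_comm]
  exact Finset.sum_congr rfl fun u _ => Finset.sum_congr rfl fun v _ => hsymm v u

lemma wsum_union_left {w : V → V → ℝ} {P P' : Finset V} (h : Disjoint P P') (Q : Finset V) :
    wsum w (P ∪ P') Q = wsum w P Q + wsum w P' Q := Finset.sum_union h

lemma wsum_union_right {w : V → V → ℝ} (P : Finset V) {Q Q' : Finset V} (h : Disjoint Q Q') :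
    wsum w P (Q ∪ Q') = wsum w P Q + wsum w P Q' := by
  rw [wsum]; simp_rw [Finset.sum_union h]; exact Finset.sum_add_distrib

lemma wsum_mono {w : V → V → ℝ} (hnonneg : ∀ u v, 0 ≤ w u v) {P P' Q Q' : Finset V}
    (hP : P ⊆ P') (hQ : Q ⊆ Q') : wsum w P Q ≤ wsum w P' Q' := by
  refine le_trans (Finset.sum_le_sum fun u _ => ?_)
    (Finset.sum_le_sum_of_subset_of_nonneg hP fun u _ _ =>
      Finset.sum_nonneg fun v _ => hnonneg _ _)
  exact Finset.sum_le_sum_of_subset_of_nonneg hQ fun v _ _ => hnonneg _ _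

lemma cutVal_eq_wsum (w : V → V → ℝ) (S : Finset V) : cutVal w S = wsum w S Sᶜ := rfl

lemma cutVal_nonneg {w : V → V → ℝ} (hnonneg : ∀ u v, 0 ≤ w u v) (S : Finset V) :
    0 ≤ cutVal w S := wsum_nonneg hnonneg _ _

lemma sum_wdeg_eq {w : V → V → ℝ} (hsymm : ∀ u v, w u v = w v u) (B : Finset V) :
    ∑ u ∈ B, wdeg w u = ein w B + wsum w B Bᶜ := by
  rw [ein, wsum, ← Finset.sum_add_distrib]
  refine Finset.sum_congr rfl fun u hu => ?_
  have hset : Finset.univ.erase u = B.erase u ∪ Bᶜ := by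
    ext x
    simp only [Finset.mem_erase, Finset.mem_univ, Finset.mem_union, Finset.mem_compl, and_true]
    constructor
    · intro hx
      by_cases hxB : x ∈ B
      · exact Or.inl ⟨hx, hxB⟩
      · exact Or.inr hxB
    · rintro (⟨hx, _⟩ | hx)
      · exact hx
      · exact fun h => hx (h ▸ hu)
  have hdisj : Disjoint (B.erase u) Bᶜ := by
    rw [Finset.disjoint_left]
    intro x hx hx'
    exact (Finset.mem_compl.mp hx') (Finset.mem_of_mem_erase hx)
  rw [wdeg, hset, Finset.sum_union hdisj]
  congr 1
  · exact Finset.sum_congr rfl fun x _ => hsymm x u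
  · exact Finset.sum_congr rfl fun x _ => hsymm x u

/-- The key exchange inequality. -/
lemma swap_bound {w : V → V → ℝ} (hsymm : ∀ u v, w u v = w v u) (hnonneg : ∀ u v, 0 ≤ w u v)
    {C R B : Finset V} (hCR : Disjoint C R) (hCB : Disjoint C B) (hRB : Disjoint R B)
    (hdeg : ∑ v ∈ R, wdeg w v ≤ ∑ u ∈ B, wdeg w u) :
    cutVal w (C ∪ R) - (2 * wsum w B C + ein w B) ≤ cutVal w (C ∪ B) := by
  set D : Finset V := (C ∪ R ∪ B)ᶜ with hD
  have hCD : Disjoint C D := by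
    rw [Finset.disjoint_left]; intro x hx hx'
    exact (Finset.mem_compl.mp hx') (by simp [hx])
  have hRD : Disjoint R D := by
    rw [Finset.disjoint_left]; intro x hx hx'
    exact (Finset.mem_compl.mp hx') (by simp [hx])
  have hBD : Disjoint B D := by
    rw [Finset.disjoint_left]; intro x hx hx'
    exact (Finset.mem_compl.mp hx') (by simp [hx])
  have hSc : (C ∪ R)ᶜ = B ∪ D := by
    ext x
    simp only [Finset.mem_compl, Finset.mem_union, hD]
    have h1 : x ∈ B → ¬(x ∈ C ∨ x ∈ R) := by
      rintro hx (h | h)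
      · exact (Finset.disjoint_left.mp hCB h) hx
      · exact (Finset.disjoint_left.mp hRB h) hx
    tauto
  have hTc : (C ∪ B)ᶜ = R ∪ D := by
    ext x
    simp only [Finset.mem_compl, Finset.mem_union, hD]
    have h1 : x ∈ R → ¬(x ∈ C ∨ x ∈ B) := by
      rintro hx (h | h)
      · exact (Finset.disjoint_left.mp hCR h) hx
      · exact (Finset.disjoint_left.mp hRB hx) h
    tauto
  have hBc : Bᶜ = C ∪ R ∪ D := by
    ext x
    simp only [Finset.mem_compl, Finset.mem_union, hD]
    have h1 : x ∈ C → x ∉ B := fun h => Finset.disjoint_left.mp hCB h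
    have h2 : x ∈ R → x ∉ B := fun h => Finset.disjoint_left.mp hRB h
    tauto
  have hRc : Rᶜ = C ∪ B ∪ D := by
    ext x
    simp only [Finset.mem_compl, Finset.mem_union, hD]
    have h1 : x ∈ C → x ∉ R := fun h => Finset.disjoint_left.mp hCR h
    have h2 : x ∈ B → x ∉ R := fun h => (Finset.disjoint_right.mp hRB) h
    tauto
  have hCRD : Disjoint (C ∪ R) D := by
    rw [Finset.disjoint_union_left]; exact ⟨hCD, hRD⟩
  have hCBD : Disjoint (C ∪ B) D := by
    rw [Finset.disjoint_union_left]; exact ⟨hCD, hBD⟩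
  have e1 : cutVal w (C ∪ R) = wsum w C B + wsum w C D + wsum w R B + wsum w R D := by
    rw [cutVal_eq_wsum, hSc, wsum_union_left hCR, wsum_union_right _ hBD,
      wsum_union_right _ hBD]
    ring
  have e2 : cutVal w (C ∪ B) = wsum w C R + wsum w C D + wsum w B R + wsum w B D := by
    rw [cutVal_eq_wsum, hTc, wsum_union_left hCB, wsum_union_right _ hRD,
      wsum_union_right _ hRD]
    ring
  have e3 : ∑ u ∈ B, wdeg w u = ein w B + (wsum w B C + wsum w B R + wsum w B D) := by
    rw [sum_wdeg_eq hsymm, hBc, wsum_union_right _ hCRD, wsum_union_right _ hCR]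
  have e4 : ∑ v ∈ R, wdeg w v = ein w R + (wsum w R C + wsum w R B + wsum w R D) := by
    rw [sum_wdeg_eq hsymm, hRc, wsum_union_right _ hCBD, wsum_union_right _ hCB]
  have c1 : wsum w B C = wsum w C B := wsum_comm hsymm _ _
  have c2 : wsum w B R = wsum w R B := wsum_comm hsymm _ _
  have c3 : wsum w R C = wsum w C R := wsum_comm hsymm _ _
  have n1 : 0 ≤ ein w R := ein_nonneg hnonneg _
  have n2 : 0 ≤ wsum w C R := wsum_nonneg hnonneg _ _
  linarith

section Counting

lemma count_mem1 (A : Finset V) (r : ℕ) (hr : 1 ≤ r) {u : V} (hu : u ∈ A) :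
    ((A.powersetCard r).filter (fun B => u ∈ B)).card = (A.card - 1).choose (r - 1) := by
  have key : ((A.powersetCard r).filter (fun B => u ∈ B)).card
      = ((A.erase u).powersetCard (r - 1)).card := by
    apply Finset.card_bij (fun B _ => B.erase u)
    · intro B hB
      simp only [Finset.mem_filter, Finset.mem_powersetCard] at hB
      obtain ⟨⟨hBA, hBr⟩, huB⟩ := hB
      rw [Finset.mem_powersetCard]
      exact ⟨Finset.erase_subset_erase _ hBA, by rw [Finset.card_erase_of_mem huB, hBr]⟩
    · intro B₁ h₁ B₂ h₂ he
      simp only [Finset.mem_filter] at h₁ h₂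
      have := congrArg (insert u) he
      rwa [Finset.insert_erase h₁.2, Finset.insert_erase h₂.2] at this
    · intro K hK
      rw [Finset.mem_powersetCard] at hK
      have huK : u ∉ K := fun h => (Finset.mem_erase.mp (hK.1 h)).1 rfl
      refine ⟨insert u K, ?_, Finset.erase_insert huK⟩
      simp only [Finset.mem_filter, Finset.mem_powersetCard]
      refine ⟨⟨?_, ?_⟩, Finset.mem_insert_self _ _⟩
      · exact Finset.insert_subset hu (hK.1.trans (Finset.erase_subset _ _))
      · rw [Finset.card_insert_of_notMem huK, hK.2]; omega
  rw [key, Finset.card_powersetCard, Finset.card_erase_of_mem hu]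

lemma count_mem2 (A : Finset V) (r : ℕ) (hr : 2 ≤ r) {u x : V} (hu : u ∈ A) (hx : x ∈ A)
    (hux : u ≠ x) :
    ((A.powersetCard r).filter (fun B => u ∈ B ∧ x ∈ B)).card
      = (A.card - 2).choose (r - 2) := by
  have key : ((A.powersetCard r).filter (fun B => u ∈ B ∧ x ∈ B)).card
      = (((A.erase u).erase x).powersetCard (r - 2)).card := by
    apply Finset.card_bij (fun B _ => (B.erase u).erase x)
    · intro B hB
      simp only [Finset.mem_filter, Finset.mem_powersetCard] at hB
      obtain ⟨⟨hBA, hBr⟩, huB, hxB⟩ := hB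
      rw [Finset.mem_powersetCard]
      refine ⟨Finset.erase_subset_erase _ (Finset.erase_subset_erase _ hBA), ?_⟩
      rw [Finset.card_erase_of_mem (Finset.mem_erase.mpr ⟨hux.symm, hxB⟩),
        Finset.card_erase_of_mem huB, hBr]
      omega
    · intro B₁ h₁ B₂ h₂ he
      simp only [Finset.mem_filter] at h₁ h₂
      have e₁ : insert u (insert x ((B₁.erase u).erase x)) = B₁ := by
        rw [Finset.insert_erase (Finset.mem_erase.mpr ⟨hux.symm, h₁.2.2⟩),
          Finset.insert_erase h₁.2.1]
      have e₂ : insert u (insert x ((B₂.erase u).erase x)) = B₂ := by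
        rw [Finset.insert_erase (Finset.mem_erase.mpr ⟨hux.symm, h₂.2.2⟩),
          Finset.insert_erase h₂.2.1]
      rw [← e₁, ← e₂, he]
    · intro K hK
      rw [Finset.mem_powersetCard] at hK
      have hxK : x ∉ K := fun h => (Finset.mem_erase.mp (hK.1 h)).1 rfl
      have huK : u ∉ K := fun h =>
        (Finset.mem_erase.mp (Finset.mem_of_mem_erase (hK.1 h))).1 rfl
      have huxK : u ∉ insert x K := by
        simp only [Finset.mem_insert]
        rintro (h | h)
        · exact hux h
        · exact huK h
      refine ⟨insert u (insert x K), ?_, ?_⟩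
      · simp only [Finset.mem_filter, Finset.mem_powersetCard]
        refine ⟨⟨?_, ?_⟩, Finset.mem_insert_self _ _, ?_⟩
        · apply Finset.insert_subset hu
          apply Finset.insert_subset hx
          exact hK.1.trans ((Finset.erase_subset _ _).trans (Finset.erase_subset _ _))
        · rw [Finset.card_insert_of_notMem huxK, Finset.card_insert_of_notMem hxK, hK.2]
          omega
        · exact Finset.mem_insert_of_mem (Finset.mem_insert_self _ _)
      · rw [Finset.erase_insert huxK, Finset.erase_insert hxK]
  rw [key, Finset.card_powersetCard, Finset.card_erase_of_mem
    (Finset.mem_erase.mpr ⟨hux.symm, hx⟩), Finset.card_erase_of_mem hu]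
  all_goals (congr 1 <;> omega)

lemma count_mem_notmem (A : Finset V) (m : ℕ) (hm : 1 ≤ m) {u x : V} (hu : u ∈ A) (hx : x ∈ A)
    (hux : u ≠ x) :
    ((A.powersetCard m).filter (fun K => u ∈ K ∧ x ∉ K)).card
      = (A.card - 2).choose (m - 1) := by
  have key : ((A.powersetCard m).filter (fun K => u ∈ K ∧ x ∉ K)).card
      = (((A.erase u).erase x).powersetCard (m - 1)).card := by
    apply Finset.card_bij (fun K _ => K.erase u)
    · intro K hK
      simp only [Finset.mem_filter, Finset.mem_powersetCard] at hK
      obtain ⟨⟨hKA, hKm⟩, huK, hxK⟩ := hK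
      rw [Finset.mem_powersetCard]
      constructor
      · intro y hy
        rw [Finset.mem_erase] at hy ⊢
        refine ⟨fun h => hxK (h ▸ hy.2), ?_⟩
        rw [Finset.mem_erase]
        exact ⟨hy.1, hKA hy.2⟩
      · rw [Finset.card_erase_of_mem huK, hKm]
    · intro K₁ h₁ K₂ h₂ he
      simp only [Finset.mem_filter] at h₁ h₂
      have := congrArg (insert u) he
      rwa [Finset.insert_erase h₁.2.1, Finset.insert_erase h₂.2.1] at this
    · intro L hL
      rw [Finset.mem_powersetCard] at hL
      have hxL : x ∉ L := fun h => (Finset.mem_erase.mp (hL.1 h)).1 rfl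
      have huL : u ∉ L := fun h =>
        (Finset.mem_erase.mp (Finset.mem_of_mem_erase (hL.1 h))).1 rfl
      refine ⟨insert u L, ?_, Finset.erase_insert huL⟩
      simp only [Finset.mem_filter, Finset.mem_powersetCard]
      refine ⟨⟨?_, ?_⟩, Finset.mem_insert_self _ _, ?_⟩
      · apply Finset.insert_subset hu
        exact hL.1.trans ((Finset.erase_subset _ _).trans (Finset.erase_subset _ _))
      · rw [Finset.card_insert_of_notMem huL, hL.2]; omega
      · simp only [Finset.mem_insert]
        rintro (h | h)
        · exact hux h.symm
        · exact hxL h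
  rw [key, Finset.card_powersetCard, Finset.card_erase_of_mem
    (Finset.mem_erase.mpr ⟨hux.symm, hx⟩), Finset.card_erase_of_mem hu]
  all_goals (congr 1 <;> omega)

lemma sum_subsets_single (A : Finset V) (r : ℕ) (g : V → ℝ) :
    ∑ B ∈ A.powersetCard r, ∑ u ∈ B, g u
      = ∑ u ∈ A, (((A.powersetCard r).filter (fun B => u ∈ B)).card : ℝ) * g u := by
  have h1 : ∀ B ∈ A.powersetCard r, ∑ u ∈ B, g u = ∑ u ∈ A, if u ∈ B then g u else 0 := by
    intro B hB
    have hBA : B ⊆ A := (Finset.mem_powersetCard.mp hB).1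
    rw [Finset.sum_ite_mem, Finset.inter_eq_right.mpr hBA]
  rw [Finset.sum_congr rfl h1, Finset.sum_comm]
  refine Finset.sum_congr rfl fun u hu => ?_
  rw [← Finset.sum_filter, Finset.sum_const, nsmul_eq_mul]

lemma sum_subsets_pairs (A : Finset V) (r : ℕ) (f : V → V → ℝ) :
    ∑ B ∈ A.powersetCard r, ∑ u ∈ B, ∑ x ∈ B.erase u, f u x
      = ∑ u ∈ A, ∑ x ∈ A.erase u,
          (((A.powersetCard r).filter (fun B => u ∈ B ∧ x ∈ B)).card : ℝ) * f u x := by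
  have h1 : ∀ B ∈ A.powersetCard r, ∑ u ∈ B, ∑ x ∈ B.erase u, f u x
      = ∑ u ∈ A, ∑ x ∈ A.erase u, if u ∈ B ∧ x ∈ B then f u x else 0 := by
    intro B hB
    have hBA : B ⊆ A := (Finset.mem_powersetCard.mp hB).1
    have h2 : ∀ u ∈ A, (∑ x ∈ A.erase u, if u ∈ B ∧ x ∈ B then f u x else 0)
        = if u ∈ B then ∑ x ∈ B.erase u, f u x else 0 := by
      intro u _
      by_cases huB : u ∈ B
      · simp only [huB, true_and, if_true]
        rw [Finset.sum_ite_mem]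
        congr 1
        ext x
        simp only [Finset.mem_inter, Finset.mem_erase]
        exact ⟨fun ⟨⟨hxu, _⟩, hxB⟩ => ⟨hxu, hxB⟩, fun ⟨hxu, hxB⟩ => ⟨⟨hxu, hBA hxB⟩, hxB⟩⟩
      · simp [huB]
    rw [Finset.sum_congr rfl h2, ← Finset.sum_filter, Finset.filter_mem_eq_inter,
      Finset.inter_eq_right.mpr hBA]
  rw [Finset.sum_congr rfl h1, Finset.sum_comm]
  refine Finset.sum_congr rfl fun u hu => ?_
  rw [Finset.sum_comm]
  refine Finset.sum_congr rfl fun x hx => ?_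
  rw [← Finset.sum_filter, Finset.sum_const, nsmul_eq_mul]

lemma sum_subsets_cross (A : Finset V) (m : ℕ) (f : V → V → ℝ) :
    ∑ K ∈ A.powersetCard m, ∑ u ∈ K, ∑ x ∈ A \ K, f u x
      = ∑ u ∈ A, ∑ x ∈ A.erase u,
          (((A.powersetCard m).filter (fun K => u ∈ K ∧ x ∉ K)).card : ℝ) * f u x := by
  have h1 : ∀ K ∈ A.powersetCard m, ∑ u ∈ K, ∑ x ∈ A \ K, f u x
      = ∑ u ∈ A, ∑ x ∈ A.erase u, if u ∈ K ∧ x ∉ K then f u x else 0 := by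
    intro K hK
    have hKA : K ⊆ A := (Finset.mem_powersetCard.mp hK).1
    have h2 : ∀ u ∈ A, (∑ x ∈ A.erase u, if u ∈ K ∧ x ∉ K then f u x else 0)
        = if u ∈ K then ∑ x ∈ A \ K, f u x else 0 := by
      intro u _
      by_cases huK : u ∈ K
      · simp only [huK, true_and, if_true]
        rw [← Finset.sum_filter]
        congr 1
        ext x
        simp only [Finset.mem_filter, Finset.mem_erase, Finset.mem_sdiff]
        constructor
        · rintro ⟨⟨_, hxA⟩, hxK⟩; exact ⟨hxA, hxK⟩
        · rintro ⟨hxA, hxK⟩; exact ⟨⟨fun h => hxK (h ▸ huK), hxA⟩, hxK⟩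
      · simp [huK]
    rw [Finset.sum_congr rfl h2, ← Finset.sum_filter, Finset.filter_mem_eq_inter,
      Finset.inter_eq_right.mpr hKA]
  rw [Finset.sum_congr rfl h1, Finset.sum_comm]
  refine Finset.sum_congr rfl fun u hu => ?_
  rw [Finset.sum_comm]
  refine Finset.sum_congr rfl fun x hx => ?_
  rw [← Finset.sum_filter, Finset.sum_const, nsmul_eq_mul]

end Counting

lemma id_choose_1 (a r : ℕ) (h1 : 1 ≤ r) (h2 : r ≤ a) :
    a * (a - 1).choose (r - 1) = r * a.choose r := by
  obtain ⟨q, rfl⟩ : ∃ q, r = q + 1 := ⟨r - 1, by omega⟩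
  obtain ⟨s, rfl⟩ : ∃ s, a = q + s + 1 := ⟨a - q - 1, by omega⟩
  simp only [show q + s + 1 - 1 = q + s from rfl, show q + 1 - 1 = q from rfl]
  have h := Nat.add_one_mul_choose_eq (q + s) q
  calc (q + s + 1) * (q + s).choose q = (q + s + 1).choose (q + 1) * (q + 1) := h
    _ = (q + 1) * (q + s + 1).choose (q + 1) := by ring

lemma id_choose_2 (a r : ℕ) (h1 : 2 ≤ r) (h2 : r ≤ a) :
    a * (a - 1) * (a - 2).choose (r - 2) = r * (r - 1) * a.choose r := by
  obtain ⟨q, rfl⟩ : ∃ q, r = q + 2 := ⟨r - 2, by omega⟩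
  obtain ⟨s, rfl⟩ : ∃ s, a = q + s + 2 := ⟨a - q - 2, by omega⟩
  simp only [show q + s + 2 - 1 = q + s + 1 from rfl, show q + s + 2 - 2 = q + s from rfl,
    show q + 2 - 1 = q + 1 from rfl, show q + 2 - 2 = q from rfl]
  have h₁ := Nat.add_one_mul_choose_eq (q + s + 1) (q + 1)
  have h₂ := Nat.add_one_mul_choose_eq (q + s) q
  calc (q + s + 2) * (q + s + 1) * (q + s).choose q
      = (q + s + 2) * ((q + s + 1) * (q + s).choose q) := by ring
    _ = (q + s + 2) * ((q + s + 1).choose (q + 1) * (q + 1)) := by rw [h₂]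
    _ = ((q + s + 2) * (q + s + 1).choose (q + 1)) * (q + 1) := by ring
    _ = ((q + s + 2).choose (q + 2) * (q + 2)) * (q + 1) := by rw [h₁]
    _ = (q + 2) * (q + 1) * (q + s + 2).choose (q + 2) := by ring

lemma id_choose_3 (a kk : ℕ) (h1 : 1 ≤ kk) (h2 : kk < a) :
    a * (a - 1) * (a - 2).choose (kk - 1) = kk * (a - kk) * a.choose kk := by
  obtain ⟨q, rfl⟩ : ∃ q, kk = q + 1 := ⟨kk - 1, by omega⟩
  obtain ⟨s, rfl⟩ : ∃ s, a = q + s + 2 := ⟨a - q - 2, by omega⟩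
  simp only [show q + s + 2 - 1 = q + s + 1 from rfl, show q + s + 2 - 2 = q + s from rfl,
    show q + 1 - 1 = q from rfl, show q + s + 2 - (q + 1) = s + 1 from by omega]
  have h₁ := Nat.add_one_mul_choose_eq (q + s + 1) q
  have h₂ := Nat.add_one_mul_choose_eq (q + s) q
  have h₃ := Nat.choose_succ_right_eq (q + s + 1) q
  rw [show q + s + 1 - q = s + 1 from by omega] at h₃
  calc (q + s + 2) * (q + s + 1) * (q + s).choose q
      = (q + s + 2) * ((q + s + 1) * (q + s).choose q) := by ring
    _ = (q + s + 2) * ((q + s + 1).choose (q + 1) * (q + 1)) := by rw [h₂]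
    _ = (q + s + 2) * ((q + s + 1).choose q * (s + 1)) := by rw [h₃]
    _ = ((q + s + 2) * (q + s + 1).choose q) * (s + 1) := by ring
    _ = ((q + s + 2).choose (q + 1) * (q + 1)) * (s + 1) := by rw [h₁]
    _ = (q + 1) * (s + 1) * (q + s + 2).choose (q + 1) := by ring

/-- The main exchange step: fix part `i` without losing more than `4εM`. -/
lemma exchange_step
    (w : V → V → ℝ) (hsymm : ∀ u v, w u v = w v u) (hnonneg : ∀ u v, 0 ≤ w u v)
    {c : ℕ} (Vb : Fin c → Finset V)
    (hVdisj : ∀ i j, i ≠ j → Disjoint (Vb i) (Vb j))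
    (k : Fin c → ℕ)
    (ε : ℝ) (hε0 : 0 < ε) (hε4 : ε ≤ 1/4)
    (H : Fin c → Finset V) (hHsub : ∀ i, H i ⊆ Vb i)
    (hdeg : ∀ i, ∀ u ∈ H i, ∀ v ∈ Vb i \ H i, wdeg w v ≤ wdeg w u)
    (hHsize : ∀ i, H i = Vb i ∨ (k i : ℝ) / ε ≤ ((H i).card : ℝ))
    (M : ℝ) (hM : ∀ S', (∀ j, (S' ∩ Vb j).card = k j) → cutVal w S' ≤ M)
    (S : Finset V) (hS : ∀ j, (S ∩ Vb j).card = k j) (i : Fin c) :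
    ∃ T, (∀ j, (T ∩ Vb j).card = k j) ∧ (∀ j, j ≠ i → T ∩ Vb j = S ∩ Vb j) ∧
      T ∩ Vb i ⊆ H i ∧ cutVal w S - 4 * ε * M ≤ cutVal w T := by
  have hM0 : 0 ≤ M := le_trans (cutVal_nonneg hnonneg S) (hM S hS)
  by_cases hsub : S ∩ Vb i ⊆ H i
  · exact ⟨S, hS, fun j _ => rfl, hsub, by nlinarith⟩
  -- the replacement sets
  set R := (S ∩ Vb i) \ H i with hRdef
  set A := H i \ S with hAdef
  set C := S \ R with hCdef
  have hRS : R ⊆ S := Finset.sdiff_subset.trans Finset.inter_subset_left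
  have hRVbH : ∀ v ∈ R, v ∈ Vb i \ H i := by
    intro v hv
    rw [hRdef, Finset.mem_sdiff, Finset.mem_inter] at hv
    exact Finset.mem_sdiff.mpr ⟨hv.1.2, hv.2⟩
  have hAH : A ⊆ H i := Finset.sdiff_subset
  have hAnS : ∀ x ∈ A, x ∉ S := fun x hx => (Finset.mem_sdiff.mp hx).2
  have hRne : R.Nonempty := Finset.sdiff_nonempty.mpr hsub
  set r := R.card with hrdef
  set a := A.card with hadef
  set kk := k i with hkkdef
  have hr1 : 1 ≤ r := Finset.card_pos.mpr hRne
  have hrk : r ≤ kk := by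
    rw [hrdef, hkkdef, ← hS i]
    exact Finset.card_le_card Finset.sdiff_subset
  have hHne : H i ≠ Vb i := by
    intro h
    exact hsub (fun x hx => h ▸ (Finset.mem_inter.mp hx).2)
  have hHcard : (kk : ℝ) / ε ≤ ((H i).card : ℝ) := (hHsize i).resolve_left hHne
  have hHiS : (H i ∩ S).card = kk - r := by
    have h1 : (S ∩ Vb i) ∩ H i = H i ∩ S := by
      ext x
      simp only [Finset.mem_inter]
      constructor
      · rintro ⟨⟨h1, _⟩, h3⟩; exact ⟨h3, h1⟩
      · rintro ⟨h1, h2⟩; exact ⟨⟨h2, hHsub i h1⟩, h1⟩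
    have h2 := Finset.card_sdiff_add_card_inter (S ∩ Vb i) (H i)
    rw [← hRdef, h1, hS i] at h2
    omega
  have haH : a + (kk - r) = (H i).card := by
    have h2 := Finset.card_sdiff_add_card_inter (H i) S
    rw [← hAdef, hHiS] at h2
    exact h2
  have hkk1 : 1 ≤ kk := le_trans hr1 hrk
  have hkkR : (1 : ℝ) ≤ (kk : ℝ) := by exact_mod_cast hkk1
  have hrR : (1 : ℝ) ≤ (r : ℝ) := by exact_mod_cast hr1
  have hrkR : (r : ℝ) ≤ (kk : ℝ) := by exact_mod_cast hrk
  have haR : (kk : ℝ) / ε - ((kk : ℝ) - (r : ℝ)) ≤ (a : ℝ) := by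
    have hkkr : ((kk - r : ℕ) : ℝ) = (kk : ℝ) - r := by
      rw [Nat.cast_sub hrk]
    have h2 : (a : ℝ) + ((kk : ℝ) - (r : ℝ)) = ((H i).card : ℝ) := by
      rw [← hkkr]
      exact_mod_cast congrArg (Nat.cast : ℕ → ℝ) haH
    linarith [hHcard]
  have h4kk : 4 * (kk : ℝ) ≤ (kk : ℝ) / ε := by
    rw [le_div_iff₀ hε0]
    nlinarith
  have hεa : (r : ℝ) ≤ ε * a := by
    have h5 := mul_le_mul_of_nonneg_left haR hε0.le
    have h6 : ε * ((kk : ℝ) / ε - ((kk : ℝ) - r)) = kk - ε * kk + ε * r := by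
      field_simp
      ring
    rw [h6] at h5
    have h7 : 0 ≤ ((kk : ℝ) - r) * (1 - ε) := mul_nonneg (by linarith) (by linarith)
    nlinarith [h5, h7]
  have hkaR : (kk : ℝ) + 1 ≤ (a : ℝ) := by linarith [haR, h4kk, hrR, hkkR]
  have hka_nat : kk < a := by
    have : (kk : ℝ) < (a : ℝ) := by linarith
    exact_mod_cast this
  have hra_nat : r ≤ a := le_trans hrk hka_nat.le
  have hF3 : (r : ℝ) * ((r : ℝ) - 1) ≤ 2 * ε * kk * ((a : ℝ) - kk) := by
    have e1 : (kk : ℝ) / ε = kk / (2 * ε) + kk / (2 * ε) := by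
      field_simp
      ring
    have e2 : 2 * (kk : ℝ) ≤ (kk : ℝ) / (2 * ε) := by
      rw [le_div_iff₀ (by positivity)]
      nlinarith
    have h9 : (kk : ℝ) / (2 * ε) ≤ (a : ℝ) - kk := by linarith [haR, hrR]
    have h10 : 2 * ε * (kk : ℝ) * ((kk : ℝ) / (2 * ε)) ≤ 2 * ε * kk * ((a : ℝ) - kk) :=
      mul_le_mul_of_nonneg_left h9 (by positivity)
    have e3 : 2 * ε * (kk : ℝ) * ((kk : ℝ) / (2 * ε)) = kk * kk := by
      field_simp
    have h11 : (r : ℝ) * ((r : ℝ) - 1) ≤ (kk : ℝ) * kk := by nlinarith [hrkR, hrR]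
    rw [e3] at h10
    linarith
  -- choose the best replacement set B₀
  have hPne : (A.powersetCard r).Nonempty := Finset.powersetCard_nonempty.mpr hra_nat
  obtain ⟨B₀, hB₀P, hB₀min⟩ := Finset.exists_min_image (A.powersetCard r)
    (fun B => 2 * wsum w B C + ein w B) hPne
  obtain ⟨hB₀A, hB₀card⟩ := Finset.mem_powersetCard.mp hB₀P
  have hCR : Disjoint C R := Finset.sdiff_disjoint
  have hCB : Disjoint C B₀ := by
    rw [Finset.disjoint_right]
    intro x hx hxC
    exact hAnS x (hB₀A hx) (Finset.mem_sdiff.mp hxC).1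
  have hRB : Disjoint R B₀ := by
    rw [Finset.disjoint_right]
    intro x hx hxR
    exact hAnS x (hB₀A hx) (hRS hxR)
  have hCuR : C ∪ R = S := Finset.sdiff_union_of_subset hRS
  have hBne : B₀.Nonempty := Finset.card_pos.mp (hB₀card ▸ hr1)
  obtain ⟨u₀, hu₀B, hu₀min⟩ := Finset.exists_min_image B₀ (wdeg w) hBne
  have hdegsum : ∑ v ∈ R, wdeg w v ≤ ∑ u ∈ B₀, wdeg w u := by
    have h1 : ∑ v ∈ R, wdeg w v ≤ R.card • wdeg w u₀ :=
      Finset.sum_le_card_nsmul R (wdeg w) (wdeg w u₀)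
        (fun x hx => hdeg i u₀ (hAH (hB₀A hu₀B)) x (hRVbH x hx))
    have h2 : B₀.card • wdeg w u₀ ≤ ∑ u ∈ B₀, wdeg w u :=
      Finset.card_nsmul_le_sum B₀ (wdeg w) (wdeg w u₀) hu₀min
    have h3 : R.card = B₀.card := by rw [hB₀card, hrdef]
    rw [h3] at h1
    exact le_trans h1 h2
  have hswap := swap_bound hsymm hnonneg hCR hCB hRB hdegsum
  rw [hCuR] at hswap
  -- properties of T := C ∪ B₀
  have hTVbi : (C ∪ B₀) ∩ Vb i = (H i ∩ S) ∪ B₀ := by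
    ext x
    simp only [Finset.mem_inter, Finset.mem_union, hCdef, hRdef, Finset.mem_sdiff,
      Finset.mem_inter]
    constructor
    · rintro ⟨hx | hxB, hxV⟩
      · left
        refine ⟨?_, hx.1⟩
        by_contra hxH
        exact hx.2 ⟨⟨hx.1, hxV⟩, hxH⟩
      · right; exact hxB
    · rintro (⟨hxH, hxS⟩ | hxB)
      · exact ⟨Or.inl ⟨hxS, fun hc => hc.2 hxH⟩, hHsub i hxH⟩
      · exact ⟨Or.inr hxB, hHsub i (hAH (hB₀A hxB))⟩
  have hTH : (C ∪ B₀) ∩ Vb i ⊆ H i := by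
    rw [hTVbi]
    intro x hx
    rcases Finset.mem_union.mp hx with h | h
    · exact (Finset.mem_inter.mp h).1
    · exact hAH (hB₀A h)
  have hdisjHS_B : Disjoint (H i ∩ S) B₀ := by
    rw [Finset.disjoint_right]
    intro x hx hx2
    exact hAnS x (hB₀A hx) (Finset.mem_inter.mp hx2).2
  have hTcard_i : ((C ∪ B₀) ∩ Vb i).card = kk := by
    rw [hTVbi, Finset.card_union_of_disjoint hdisjHS_B, hHiS, hB₀card]
    omega
  have hTVbj : ∀ j, j ≠ i → (C ∪ B₀) ∩ Vb j = S ∩ Vb j := by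
    intro j hj
    have hdisjij : Disjoint (Vb i) (Vb j) := hVdisj i j (fun h => hj h.symm)
    ext x
    simp only [Finset.mem_inter, Finset.mem_union]
    constructor
    · rintro ⟨hx | hx, hxV⟩
      · exact ⟨(Finset.mem_sdiff.mp hx).1, hxV⟩
      · exact absurd hxV (Finset.disjoint_left.mp hdisjij (hHsub i (hAH (hB₀A hx))))
    · rintro ⟨hxS, hxV⟩
      refine ⟨Or.inl ?_, hxV⟩
      rw [hCdef, Finset.mem_sdiff]
      refine ⟨hxS, fun hxR => ?_⟩
      have hxVi : x ∈ Vb i := Finset.mem_sdiff.mp (hRVbH x hxR) |>.1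
      exact Finset.disjoint_left.mp hdisjij hxVi hxV
  have hTF : ∀ j, ((C ∪ B₀) ∩ Vb j).card = k j := by
    intro j
    by_cases hji : j = i
    · subst hji
      rw [hTcard_i, hkkdef]
    · rw [hTVbj j hji]
      exact hS j
  -- averaging over all candidate replacement sets
  set N : ℝ := (a.choose r : ℝ) with hNdef
  have hNpos : 0 < N := by
    rw [hNdef]
    exact_mod_cast Nat.choose_pos hra_nat
  have havg : N * (2 * wsum w B₀ C + ein w B₀) ≤
      ∑ B ∈ A.powersetCard r, (2 * wsum w B C + ein w B) := by
    have h := Finset.card_nsmul_le_sum (A.powersetCard r)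
      (fun B => 2 * wsum w B C + ein w B) (2 * wsum w B₀ C + ein w B₀) hB₀min
    rwa [Finset.card_powersetCard, nsmul_eq_mul] at h
  have hW1 : wsum w A C ≤ M := by
    calc wsum w A C ≤ wsum w A S := wsum_mono hnonneg (Finset.Subset.refl A)
          (hCdef ▸ Finset.sdiff_subset)
      _ = wsum w S A := wsum_comm hsymm _ _
      _ ≤ wsum w S Sᶜ := wsum_mono hnonneg (Finset.Subset.refl S)
          (fun x hx => Finset.mem_compl.mpr (hAnS x hx))
      _ = cutVal w S := (cutVal_eq_wsum w S).symm
      _ ≤ M := hM S hS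
  have hW0 : 0 ≤ wsum w A C := wsum_nonneg hnonneg _ _
  have hE0 : 0 ≤ ein w A := ein_nonneg hnonneg _
  -- the certificate: kk-subsets of A give feasible solutions
  have hcert : ((a - 2).choose (kk - 1) : ℝ) * ein w A ≤ (a.choose kk : ℝ) * M := by
    have hKle : ∀ K ∈ A.powersetCard kk, wsum w K (A \ K) ≤ M := by
      intro K hK
      obtain ⟨hKA, hKcard⟩ := Finset.mem_powersetCard.mp hK
      have hSKF : ∀ j, (((S \ Vb i) ∪ K) ∩ Vb j).card = k j := by
        intro j
        by_cases hji : j = i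
        · subst hji
          have hKeq : ((S \ Vb j) ∪ K) ∩ Vb j = K := by
            ext x
            simp only [Finset.mem_inter, Finset.mem_union, Finset.mem_sdiff]
            constructor
            · rintro ⟨hx | hx, hxV⟩
              · exact absurd hxV hx.2
              · exact hx
            · intro hx
              exact ⟨Or.inr hx, hHsub _ (hAH (hKA hx))⟩
          rw [hKeq, hKcard, hkkdef]
        · have hdisjij : Disjoint (Vb i) (Vb j) := hVdisj i j (fun h => hji h.symm)
          have hKeq : ((S \ Vb i) ∪ K) ∩ Vb j = S ∩ Vb j := by
            ext x
            simp only [Finset.mem_inter, Finset.mem_union, Finset.mem_sdiff]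
            constructor
            · rintro ⟨hx | hx, hxV⟩
              · exact ⟨hx.1, hxV⟩
              · exact absurd hxV
                  (Finset.disjoint_left.mp hdisjij (hHsub i (hAH (hKA hx))))
            · rintro ⟨hxS, hxV⟩
              exact ⟨Or.inl ⟨hxS, fun hxVi => Finset.disjoint_left.mp hdisjij hxVi hxV⟩, hxV⟩
          rw [hKeq]
          exact hS j
      have h1 : wsum w K (A \ K) ≤ cutVal w ((S \ Vb i) ∪ K) := by
        rw [cutVal_eq_wsum]
        apply wsum_mono hnonneg Finset.subset_union_right
        intro x hx
        obtain ⟨hxA, hxK⟩ := Finset.mem_sdiff.mp hx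
        rw [Finset.mem_compl]
        intro hmem
        rcases Finset.mem_union.mp hmem with h | h
        · exact hAnS x hxA (Finset.mem_sdiff.mp h).1
        · exact hxK h
      exact le_trans h1 (hM _ hSKF)
    have hsumK : ∑ K ∈ A.powersetCard kk, wsum w K (A \ K)
        = ((a - 2).choose (kk - 1) : ℝ) * ein w A := by
      have hrw : ∑ K ∈ A.powersetCard kk, wsum w K (A \ K)
          = ∑ K ∈ A.powersetCard kk, ∑ u ∈ K, ∑ x ∈ A \ K, w u x := rfl
      rw [hrw, sum_subsets_cross, ein, Finset.mul_sum]
      refine Finset.sum_congr rfl fun u hu => ?_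
      rw [Finset.mul_sum]
      refine Finset.sum_congr rfl fun x hx => ?_
      rw [count_mem_notmem A kk hkk1 hu (Finset.mem_of_mem_erase hx)
        (fun h => (Finset.mem_erase.mp hx).1 h.symm)]
    have hle : ∑ K ∈ A.powersetCard kk, wsum w K (A \ K) ≤ (a.choose kk : ℝ) * M := by
      have h := Finset.sum_le_card_nsmul (A.powersetCard kk)
        (fun K => wsum w K (A \ K)) M hKle
      rwa [Finset.card_powersetCard, nsmul_eq_mul] at h
    rw [← hsumK]
    exact hle
  -- expand the sum over candidates
  have hsingle : ∑ B ∈ A.powersetCard r, wsum w B C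
      = ((a - 1).choose (r - 1) : ℝ) * wsum w A C := by
    have hrw : ∑ B ∈ A.powersetCard r, wsum w B C
        = ∑ B ∈ A.powersetCard r, ∑ u ∈ B, (∑ v ∈ C, w u v) := rfl
    rw [hrw, sum_subsets_single, wsum, Finset.mul_sum]
    refine Finset.sum_congr rfl fun u hu => ?_
    rw [count_mem1 A r hr1 hu]
  have hsumsplit : ∑ B ∈ A.powersetCard r, (2 * wsum w B C + ein w B)
      = 2 * (((a - 1).choose (r - 1) : ℝ) * wsum w A C)
        + ∑ B ∈ A.powersetCard r, ein w B := by
    rw [Finset.sum_add_distrib, ← Finset.mul_sum, hsingle]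
  -- bound the linear term
  have hA1 : ((a - 1).choose (r - 1) : ℝ) * wsum w A C ≤ ε * N * M := by
    have hid1R : (a : ℝ) * ((a - 1).choose (r - 1) : ℝ) = (r : ℝ) * N := by
      rw [hNdef]
      have h := id_choose_1 a r hr1 hra_nat
      exact_mod_cast congrArg (Nat.cast : ℕ → ℝ) h
    have apos : (0 : ℝ) < (a : ℝ) := by linarith [hkaR, hkkR]
    have v1 : (a : ℝ) * (((a - 1).choose (r - 1) : ℝ) * wsum w A C)
        = ((r : ℝ) * N) * wsum w A C := by
      linear_combination (wsum w A C) * hid1R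
    have w1 : (r : ℝ) * N ≤ ε * (a : ℝ) * N := by nlinarith [hεa, hNpos.le]
    have v2 : ((r : ℝ) * N) * wsum w A C ≤ (ε * (a : ℝ) * N) * wsum w A C :=
      mul_le_mul_of_nonneg_right w1 hW0
    have v3 : (ε * (a : ℝ) * N) * wsum w A C ≤ (ε * (a : ℝ) * N) * M :=
      mul_le_mul_of_nonneg_left hW1 (by positivity)
    have v4 : (ε * (a : ℝ) * N) * M = (a : ℝ) * (ε * N * M) := by ring
    have v5 : (a : ℝ) * (((a - 1).choose (r - 1) : ℝ) * wsum w A C)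
        ≤ (a : ℝ) * (ε * N * M) := by linarith
    exact le_of_mul_le_mul_left v5 apos
  -- bound the quadratic term
  have heinsum : ∑ B ∈ A.powersetCard r, ein w B ≤ 2 * ε * N * M := by
    rcases eq_or_lt_of_le hr1 with hr1' | hr2
    · have hz : ∀ B ∈ A.powersetCard r, ein w B = 0 := by
        intro B hB
        obtain ⟨_, hBcard⟩ := Finset.mem_powersetCard.mp hB
        obtain ⟨y, rfl⟩ := Finset.card_eq_one.mp (hBcard.trans hr1'.symm)
        simp [ein]
      rw [Finset.sum_congr rfl hz, Finset.sum_const, smul_zero]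
      positivity
    · have hr2' : 2 ≤ r := hr2
      have hpairs : ∑ B ∈ A.powersetCard r, ein w B
          = ((a - 2).choose (r - 2) : ℝ) * ein w A := by
        have hrw : ∑ B ∈ A.powersetCard r, ein w B
            = ∑ B ∈ A.powersetCard r, ∑ u ∈ B, ∑ x ∈ B.erase u, w u x := rfl
        rw [hrw, sum_subsets_pairs, ein, Finset.mul_sum]
        refine Finset.sum_congr rfl fun u hu => ?_
        rw [Finset.mul_sum]
        refine Finset.sum_congr rfl fun x hx => ?_
        rw [count_mem2 A r hr2' hu (Finset.mem_of_mem_erase hx)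
          (fun h => (Finset.mem_erase.mp hx).1 h.symm)]
      rw [hpairs]
      have ha2 : 2 ≤ a := by omega
      have hid2R : (a : ℝ) * ((a : ℝ) - 1) * ((a - 2).choose (r - 2) : ℝ)
          = (r : ℝ) * ((r : ℝ) - 1) * N := by
        rw [hNdef]
        have h := id_choose_2 a r hr2' hra_nat
        have hc : ((a : ℕ) : ℝ) * (((a - 1 : ℕ)) : ℝ) * (((a - 2).choose (r - 2) : ℕ) : ℝ)
            = ((r : ℕ) : ℝ) * (((r - 1 : ℕ)) : ℝ) * ((a.choose r : ℕ) : ℝ) := by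
          exact_mod_cast congrArg (Nat.cast : ℕ → ℝ) h
        rwa [Nat.cast_sub (by omega : 1 ≤ a), Nat.cast_sub (by omega : 1 ≤ r),
          Nat.cast_one] at hc
      have hid3R : (a : ℝ) * ((a : ℝ) - 1) * ((a - 2).choose (kk - 1) : ℝ)
          = (kk : ℝ) * ((a : ℝ) - (kk : ℝ)) * (a.choose kk : ℝ) := by
        have h := id_choose_3 a kk hkk1 hka_nat
        have hc : ((a : ℕ) : ℝ) * (((a - 1 : ℕ)) : ℝ) * (((a - 2).choose (kk - 1) : ℕ) : ℝ)
            = ((kk : ℕ) : ℝ) * (((a - kk : ℕ)) : ℝ) * ((a.choose kk : ℕ) : ℝ) := by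
          exact_mod_cast congrArg (Nat.cast : ℕ → ℝ) h
        rwa [Nat.cast_sub (by omega : 1 ≤ a), Nat.cast_sub (by omega : kk ≤ a),
          Nat.cast_one] at hc
      have hQpos : (0 : ℝ) < ((a - 2).choose (kk - 1) : ℝ) := by
        exact_mod_cast Nat.choose_pos (by omega : kk - 1 ≤ a - 2)
      have haapos : (0 : ℝ) < (a : ℝ) * ((a : ℝ) - 1) := by
        have h2a : (2 : ℝ) ≤ (a : ℝ) := by exact_mod_cast ha2
        nlinarith
      have hkank : (0 : ℝ) ≤ (kk : ℝ) * ((a : ℝ) - (kk : ℝ)) := by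
        apply mul_nonneg (by positivity)
        linarith
      -- s1 : kk (a - kk) E ≤ a (a-1) M
      have s1 : (kk : ℝ) * ((a : ℝ) - kk) * ein w A ≤ (a : ℝ) * ((a : ℝ) - 1) * M := by
        have t2 : (kk : ℝ) * ((a : ℝ) - kk) * (((a - 2).choose (kk - 1) : ℝ) * ein w A)
            ≤ (kk : ℝ) * ((a : ℝ) - kk) * ((a.choose kk : ℝ) * M) :=
          mul_le_mul_of_nonneg_left hcert hkank
        have t3 : (kk : ℝ) * ((a : ℝ) - kk) * ((a.choose kk : ℝ) * M)
            = ((a - 2).choose (kk - 1) : ℝ) * ((a : ℝ) * ((a : ℝ) - 1) * M) := by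
          linear_combination M * hid3R.symm
        have t4 : ((a - 2).choose (kk - 1) : ℝ) * ((kk : ℝ) * ((a : ℝ) - kk) * ein w A)
            ≤ ((a - 2).choose (kk - 1) : ℝ) * ((a : ℝ) * ((a : ℝ) - 1) * M) := by
          calc ((a - 2).choose (kk - 1) : ℝ) * ((kk : ℝ) * ((a : ℝ) - kk) * ein w A)
              = (kk : ℝ) * ((a : ℝ) - kk) * (((a - 2).choose (kk - 1) : ℝ) * ein w A) := by
                ring
            _ ≤ (kk : ℝ) * ((a : ℝ) - kk) * ((a.choose kk : ℝ) * M) := t2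
            _ = ((a - 2).choose (kk - 1) : ℝ) * ((a : ℝ) * ((a : ℝ) - 1) * M) := t3
        exact le_of_mul_le_mul_left t4 hQpos
      have s2 : (a : ℝ) * ((a : ℝ) - 1) * (((a - 2).choose (r - 2) : ℝ) * ein w A)
          ≤ (a : ℝ) * ((a : ℝ) - 1) * (2 * ε * N * M) := by
        have u1 : (a : ℝ) * ((a : ℝ) - 1) * (((a - 2).choose (r - 2) : ℝ) * ein w A)
            = ((r : ℝ) * ((r : ℝ) - 1)) * (N * ein w A) := by
          linear_combination (ein w A) * hid2R
        have u2 : ((r : ℝ) * ((r : ℝ) - 1)) * (N * ein w A)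
            ≤ (2 * ε * (kk : ℝ) * ((a : ℝ) - kk)) * (N * ein w A) :=
          mul_le_mul_of_nonneg_right hF3 (by positivity)
        have u3 : (2 * ε * (kk : ℝ) * ((a : ℝ) - kk)) * (N * ein w A)
            = 2 * ε * N * ((kk : ℝ) * ((a : ℝ) - kk) * ein w A) := by ring
        have u4 : 2 * ε * N * ((kk : ℝ) * ((a : ℝ) - kk) * ein w A)
            ≤ 2 * ε * N * ((a : ℝ) * ((a : ℝ) - 1) * M) :=
          mul_le_mul_of_nonneg_left s1 (by positivity)
        have u5 : 2 * ε * N * ((a : ℝ) * ((a : ℝ) - 1) * M)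
            = (a : ℝ) * ((a : ℝ) - 1) * (2 * ε * N * M) := by ring
        linarith
      exact le_of_mul_le_mul_left s2 haapos
  -- put everything together
  have hfinal : N * (2 * wsum w B₀ C + ein w B₀) ≤ N * (4 * ε * M) := by
    calc N * (2 * wsum w B₀ C + ein w B₀)
        ≤ ∑ B ∈ A.powersetCard r, (2 * wsum w B C + ein w B) := havg
      _ = 2 * (((a - 1).choose (r - 1) : ℝ) * wsum w A C)
            + ∑ B ∈ A.powersetCard r, ein w B := hsumsplit
      _ ≤ 2 * (ε * N * M) + 2 * ε * N * M := by linarith [hA1, heinsum]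
      _ = N * (4 * ε * M) := by ring
  have hcost : 2 * wsum w B₀ C + ein w B₀ ≤ 4 * ε * M := le_of_mul_le_mul_left hfinal hNpos
  exact ⟨C ∪ B₀, hTF, hTVbj, hTH, by linarith [hswap]⟩

end MCK

theorem maxcut_kernel_constrained {V : Type*} [Fintype V] [DecidableEq V]
    (w : V → V → ℝ) (hsymm : ∀ u v, w u v = w v u) (hnonneg : ∀ u v, 0 ≤ w u v)
    (c : ℕ) (Vb : Fin c → Finset V)
    (hVne : ∀ i, (Vb i).Nonempty)
    (hVdisj : ∀ i j, i ≠ j → Disjoint (Vb i) (Vb j))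
    (hVcover : ∀ v : V, ∃ i, v ∈ Vb i)
    (k : Fin c → ℕ) (hk1 : ∀ i, 1 ≤ k i) (hk2 : ∀ i, 2 * k i ≤ (Vb i).card)
    (ε : ℝ) (hε0 : 0 < ε) (hε : ε ≤ 1 / 2)
    (H : Fin c → Finset V) (hHsub : ∀ i, H i ⊆ Vb i)
    (hdeg : ∀ i, ∀ u ∈ H i, ∀ v ∈ Vb i \ H i, wdeg w v ≤ wdeg w u)
    (hHsize : ∀ i, H i = Vb i ∨ (k i : ℝ) / ε ≤ ((H i).card : ℝ)) :
    ∃ T : Finset V, (∀ i, T ∩ Vb i ⊆ H i ∧ (T ∩ Vb i).card = k i) ∧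
      ∀ S : Finset V, (∀ i, (S ∩ Vb i).card = k i) →
        (1 - 4 * (c : ℝ) * ε) * cutVal w S ≤ cutVal w T := by
  classical
  -- kernel sets are large enough
  have hkH : ∀ i, k i ≤ (H i).card := by
    intro i
    rcases hHsize i with h | h
    · rw [h]; have := hk2 i; omega
    · have h2 : (k i : ℝ) ≤ (k i : ℝ) / ε := by
        rw [le_div_iff₀ hε0]
        nlinarith [Nat.cast_nonneg (α := ℝ) (k i)]
      exact_mod_cast le_trans h2 h
  -- a feasible solution inside the kernel
  choose t ht using fun j => Finset.exists_subset_card_eq (hkH j)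
  set T₀ : Finset V := Finset.univ.biUnion t with hT₀def
  have hT₀ : ∀ j, T₀ ∩ Vb j = t j := by
    intro j
    ext x
    simp only [hT₀def, Finset.mem_inter, Finset.mem_biUnion, Finset.mem_univ, true_and]
    constructor
    · rintro ⟨⟨i', hx⟩, hxV⟩
      by_cases hij : i' = j
      · exact hij ▸ hx
      · exact absurd hxV
          (Finset.disjoint_left.mp (hVdisj i' j hij) (hHsub i' ((ht i').1 hx)))
    · intro hx
      exact ⟨⟨j, hx⟩, hHsub j ((ht j).1 hx)⟩
  have hT₀H : ∀ j, T₀ ∩ Vb j ⊆ H j := by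
    intro j; rw [hT₀ j]; exact (ht j).1
  have hT₀F : ∀ j, (T₀ ∩ Vb j).card = k j := by
    intro j; rw [hT₀ j]; exact (ht j).2
  by_cases htriv : 1 - 4 * (c : ℝ) * ε ≤ 0
  · refine ⟨T₀, fun i => ⟨hT₀H i, hT₀F i⟩, fun S hSF => ?_⟩
    have h1 : 0 ≤ cutVal w S := MCK.cutVal_nonneg hnonneg S
    have h2 : 0 ≤ cutVal w T₀ := MCK.cutVal_nonneg hnonneg T₀
    nlinarith
  push_neg at htriv
  -- the optimum
  obtain ⟨Sm, hSmmem, hSmmax⟩ := Finset.exists_max_image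
    ((Finset.univ : Finset (Finset V)).filter (fun S => ∀ j, (S ∩ Vb j).card = k j))
    (cutVal w) ⟨T₀, Finset.mem_filter.mpr ⟨Finset.mem_univ _, hT₀F⟩⟩
  have hSmF : ∀ j, (Sm ∩ Vb j).card = k j := (Finset.mem_filter.mp hSmmem).2
  set M := cutVal w Sm with hMdef
  have hM : ∀ S, (∀ j, (S ∩ Vb j).card = k j) → cutVal w S ≤ M := by
    intro S hSF
    exact hSmmax S (Finset.mem_filter.mpr ⟨Finset.mem_univ _, hSF⟩)
  have hM0 : 0 ≤ M := MCK.cutVal_nonneg hnonneg Sm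
  -- iterate the exchange step over the parts
  have key : ∀ n, n ≤ c → ∃ T, (∀ j, (T ∩ Vb j).card = k j) ∧
      (∀ j : Fin c, (j : ℕ) < n → T ∩ Vb j ⊆ H j) ∧
      M - n * (4 * ε * M) ≤ cutVal w T := by
    intro n
    induction n with
    | zero => exact fun _ => ⟨Sm, hSmF, fun j hj => absurd hj (by omega), by simp; exact le_of_eq hMdef⟩
    | succ n ih =>
      intro hn
      obtain ⟨T, hTF, hTH, hTcut⟩ := ih (by omega)
      have hcpos : 0 < c := by omega
      have hε4 : ε ≤ 1 / 4 := by
        have hc1 : (1 : ℝ) ≤ (c : ℝ) := by exact_mod_cast hcpos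
        nlinarith
      set i : Fin c := ⟨n, by omega⟩ with hidef
      obtain ⟨T', h1, h2, h3, h4⟩ := MCK.exchange_step w hsymm hnonneg Vb hVdisj k ε hε0 hε4
        H hHsub hdeg hHsize M hM T hTF i
      refine ⟨T', h1, ?_, ?_⟩
      · intro j hj
        by_cases hji : j = i
        · rw [hji]; exact h3
        · rw [h2 j hji]
          apply hTH
          have : (j : ℕ) ≠ n := fun h => hji (Fin.ext h)
          omega
      · push_cast
        linarith
  obtain ⟨T, hTF, hTH, hTcut⟩ := key c le_rfl
  refine ⟨T, fun i => ⟨hTH i i.isLt, hTF i⟩, fun S hSF => ?_⟩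
  have h1 : cutVal w S ≤ M := hM S hSF
  have h2 : 0 ≤ cutVal w S := MCK.cutVal_nonneg hnonneg S
  nlinarith
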